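/- Let A_1, …, A_N (N ≥ 1) be self-adjoint operators on a finite-dimensional complex Hilbert space satisfying A_i² = I for every i and A_j A_k + A_k A_j = 0 for all j ≠ k. For a unit vector ψ, let P_i^± = (I ± A_i)/2 be the spectral projections of A_i and p_i^± = ⟨ψ, P_i^± ψ⟩ the outcome probabilities. Then the average fidelity-based disturbance satisfies (1/N) Σ_{i=1}^{N} (1 − (p_i^+)² − (p_i^-)²) ≥ (1/2)(1 − 1/N). -/

import Mathlib

open Matrix


private lemma sum_mulVec' {n N : ℕ} (M : Fin N → Matrix (Fin n) (Fin n) ℂ) (ψ : Fin n → ℂ) :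
    (∑ i, M i) *ᵥ ψ = ∑ i, (M i *ᵥ ψ) := by
  ext x
  simp [mulVec, dotProduct, Finset.sum_apply, Matrix.sum_apply, Finset.sum_mul]
  rw [Finset.sum_comm]

private lemma dotProduct_sum' {n N : ℕ} (v : Fin n → ℂ) (w : Fin N → Fin n → ℂ) :
    v ⬝ᵥ (∑ i, w i) = ∑ i, v ⬝ᵥ w i := by
  simp [dotProduct, Finset.sum_apply, Finset.mul_sum]
  exact Finset.sum_comm

/-- For `N ≥ 1` pairwise anticommuting dichotomic observables
`A i` (self-adjoint, `Aᵢ² = I`, anticommuting for distinct indices) on a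
finite-dimensional complex Hilbert space, any unit vector `ψ`, and outcome
probabilities `pᵢ± = ⟨ψ, (I ± A i)/2 ψ⟩`, the average fidelity-based disturbance
satisfies `(1/N) ∑ i (1 - (pᵢ⁺)² - (pᵢ⁻)²) ≥ (1/2)(1 - 1/N)`. -/
theorem anticommuting_disturbance_tradeoff {n N : ℕ} (hN : 1 ≤ N)
    (A : Fin N → Matrix (Fin n) (Fin n) ℂ)
    (hherm : ∀ i, (A i).IsHermitian)
    (hsq : ∀ i, A i * A i = 1)
    (hanti : ∀ j k, j ≠ k → A j * A k + A k * A j = 0)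
    (ψ : Fin n → ℂ) (hψ : star ψ ⬝ᵥ ψ = 1) :
    (1 / (N : ℝ)) * ∑ i,
        (1 - ((star ψ ⬝ᵥ (((2 : ℂ)⁻¹) • (1 + A i)) *ᵥ ψ).re) ^ 2
           - ((star ψ ⬝ᵥ (((2 : ℂ)⁻¹) • (1 - A i)) *ᵥ ψ).re) ^ 2)
      ≥ (1 / 2) * (1 - 1 / (N : ℝ)) := by
  have hreal : ∀ i, star ψ ⬝ᵥ A i *ᵥ ψ = (((star ψ ⬝ᵥ A i *ᵥ ψ).re : ℝ) : ℂ) := by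
    intro i
    have h : star (star ψ ⬝ᵥ A i *ᵥ ψ) = star ψ ⬝ᵥ A i *ᵥ ψ :=
      calc star (star ψ ⬝ᵥ A i *ᵥ ψ) = star (A i *ᵥ ψ) ⬝ᵥ star (star ψ) :=
            (star_dotProduct_star _ _).symm
        _ = (star ψ ᵥ* (A i)ᴴ) ⬝ᵥ ψ := by rw [star_star, star_mulVec]
        _ = star ψ ⬝ᵥ A i *ᵥ ψ := by rw [(hherm i).eq, ← dotProduct_mulVec]
    exact (Complex.conj_eq_iff_re.mp h).symm
  set a : Fin N → ℝ := fun i => (star ψ ⬝ᵥ A i *ᵥ ψ).re with ha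
  set s : ℝ := ∑ i, (a i) ^ 2 with hs
  have hs0 : 0 ≤ s := Finset.sum_nonneg fun i _ => sq_nonneg _
  set B : Matrix (Fin n) (Fin n) ℂ := ∑ i, ((a i : ℂ)) • A i with hB
  have hBH : Bᴴ = B := by
    rw [hB, conjTranspose_sum]
    refine Finset.sum_congr rfl fun i _ => ?_
    rw [conjTranspose_smul, (hherm i).eq]
    simp
  set f : Fin N → Fin N → Matrix (Fin n) (Fin n) ℂ :=
    fun j k => ((a j * a k : ℝ) : ℂ) • (A j * A k) with hf
  have key : ∀ j k, f j k + f k j =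
      if j = k then ((2 * (a j) ^ 2 : ℝ) : ℂ) • (1 : Matrix (Fin n) (Fin n) ℂ) else 0 := by
    intro j k
    show ((a j * a k : ℝ) : ℂ) • (A j * A k) + ((a k * a j : ℝ) : ℂ) • (A k * A j) = _
    by_cases h : j = k
    · subst h
      rw [if_pos rfl]
      simp only [hsq j]
      rw [← add_smul]
      congr 1
      push_cast; ring
    · rw [if_neg h]
      have h2 : ((a k * a j : ℝ) : ℂ) = ((a j * a k : ℝ) : ℂ) := by push_cast; ring
      rw [h2, ← smul_add, hanti j k h, smul_zero]
  have expand : B * B = ∑ j, ∑ k, f j k := by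
    rw [hB, Finset.sum_mul_sum]
    refine Finset.sum_congr rfl fun j _ => Finset.sum_congr rfl fun k _ => ?_
    show _ = ((a j * a k : ℝ) : ℂ) • (A j * A k)
    rw [smul_mul_smul_comm]
    push_cast; ring_nf
  have hBB : B * B = ((s : ℝ) : ℂ) • 1 := by
    have step : ∑ j, ∑ k, (f j k + f k j) = (2 : ℂ) • (B * B) := by
      simp only [Finset.sum_add_distrib]
      rw [expand, two_smul]
      congr 1
      exact Finset.sum_comm
    have step2 : (2 : ℂ) • (B * B) = ((2 * s : ℝ) : ℂ) • 1 := by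
      rw [← step]
      simp only [key]
      rw [Finset.sum_congr rfl (fun j _ => Finset.sum_ite_eq Finset.univ j
        (fun _ => ((2 * (a j) ^ 2 : ℝ) : ℂ) • (1 : Matrix (Fin n) (Fin n) ℂ)))]
      simp only [Finset.mem_univ, if_pos]
      rw [← Finset.sum_smul]
      congr 1
      push_cast [hs]
      rw [Finset.mul_sum]
    have h2 : ((2 * s : ℝ) : ℂ) • (1 : Matrix (Fin n) (Fin n) ℂ)
        = (2 : ℂ) • (((s : ℝ) : ℂ) • 1) := by
      rw [smul_smul]; push_cast; ring_nf
    rw [h2] at step2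
    exact smul_right_injective _ (two_ne_zero) step2
  have h1 : star ψ ⬝ᵥ B *ᵥ ψ = ((s : ℝ) : ℂ) := by
    rw [hB, sum_mulVec', dotProduct_sum']
    have : ∀ i, star ψ ⬝ᵥ (((a i : ℂ) • A i) *ᵥ ψ) = ((a i : ℂ)) ^ 2 := by
      intro i
      rw [smul_mulVec, dotProduct_smul, hreal i]
      show (a i : ℂ) • ((a i : ℝ) : ℂ) = _
      rw [smul_eq_mul]; ring
    rw [Finset.sum_congr rfl fun i _ => this i]
    push_cast [hs]
    rfl
  have h2 : star (B *ᵥ ψ) ⬝ᵥ (B *ᵥ ψ) = ((s : ℝ) : ℂ) := by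
    rw [star_mulVec, hBH, ← dotProduct_mulVec, mulVec_mulVec, hBB,
      smul_mulVec, one_mulVec, dotProduct_smul, hψ, smul_eq_mul, mul_one]
  -- Cauchy–Schwarz: s ≤ 1
  have hs1 : s ≤ 1 := by
    set x : EuclideanSpace ℂ (Fin n) := (WithLp.equiv 2 _).symm ψ with hx
    set y : EuclideanSpace ℂ (Fin n) := (WithLp.equiv 2 _).symm (B *ᵥ ψ) with hy
    have hxy : inner ℂ x y = ((s : ℝ) : ℂ) := by
      rw [hx, hy, WithLp.equiv_symm_apply, EuclideanSpace.inner_toLp_toLp, dotProduct_comm, h1]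
    have hxx : inner ℂ x x = (1 : ℂ) := by
      rw [hx, WithLp.equiv_symm_apply, EuclideanSpace.inner_toLp_toLp, dotProduct_comm, hψ]
    have hyy : inner ℂ y y = ((s : ℝ) : ℂ) := by
      rw [hy, WithLp.equiv_symm_apply, EuclideanSpace.inner_toLp_toLp, dotProduct_comm, h2]
    have hnx : ‖x‖ = 1 := by
      have := @inner_self_eq_norm_sq ℂ _ _ _ _ x
      rw [hxx] at this
      simp at this
      nlinarith [norm_nonneg x]
    have hny : ‖y‖ ^ 2 = s := by
      have := @inner_self_eq_norm_sq ℂ _ _ _ _ y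
      rw [hyy] at this
      simpa using this.symm
    have hcs : ‖(inner ℂ x y : ℂ)‖ ≤ ‖x‖ * ‖y‖ := norm_inner_le_norm x y
    rw [hxy, hnx, one_mul] at hcs
    have : s ≤ ‖y‖ := by
      calc s ≤ |s| := le_abs_self s
        _ = ‖s‖ := (Real.norm_eq_abs s).symm
        _ = ‖((s : ℝ) : ℂ)‖ := (Complex.norm_real s).symm
        _ ≤ ‖y‖ := hcs
    nlinarith [norm_nonneg y]
  -- rewrite the probabilities
  have hplus : ∀ i, (star ψ ⬝ᵥ (((2 : ℂ)⁻¹) • (1 + A i)) *ᵥ ψ).re = (1 + a i) / 2 := by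
    intro i
    have : star ψ ⬝ᵥ (((2 : ℂ)⁻¹) • (1 + A i)) *ᵥ ψ = (((1 + a i) / 2 : ℝ) : ℂ) := by
      rw [smul_mulVec, add_mulVec, one_mulVec, dotProduct_smul, dotProduct_add, hψ,
        hreal i]
      show (2 : ℂ)⁻¹ • (1 + ((a i : ℝ) : ℂ)) = _
      rw [smul_eq_mul]; push_cast; ring
    rw [this, Complex.ofReal_re]
  have hminus : ∀ i, (star ψ ⬝ᵥ (((2 : ℂ)⁻¹) • (1 - A i)) *ᵥ ψ).re = (1 - a i) / 2 := by
    intro i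
    have : star ψ ⬝ᵥ (((2 : ℂ)⁻¹) • (1 - A i)) *ᵥ ψ = (((1 - a i) / 2 : ℝ) : ℂ) := by
      rw [smul_mulVec, sub_mulVec, one_mulVec, dotProduct_smul, dotProduct_sub, hψ,
        hreal i]
      show (2 : ℂ)⁻¹ • (1 - ((a i : ℝ) : ℂ)) = _
      rw [smul_eq_mul]; push_cast; ring
    rw [this, Complex.ofReal_re]
  have hsum : ∑ i, ((1 : ℝ) - ((star ψ ⬝ᵥ (((2 : ℂ)⁻¹) • (1 + A i)) *ᵥ ψ).re) ^ 2
           - ((star ψ ⬝ᵥ (((2 : ℂ)⁻¹) • (1 - A i)) *ᵥ ψ).re) ^ 2)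
      = (N : ℝ) / 2 - s / 2 := by
    have hterm : ∀ i : Fin N, (1 : ℝ) - ((1 + a i) / 2) ^ 2 - ((1 - a i) / 2) ^ 2
        = 1 / 2 - (a i) ^ 2 / 2 := fun i => by ring
    rw [Finset.sum_congr rfl (fun i _ => by rw [hplus i, hminus i, hterm i])]
    rw [Finset.sum_sub_distrib, ← Finset.sum_div, ← Finset.sum_div, hs, Finset.sum_const]
    simp
  rw [hsum]
  have hNpos : (0 : ℝ) < N := by exact_mod_cast hN
  rw [ge_iff_le, ← sub_nonneg]
  have : 1 / (N : ℝ) * ((N : ℝ) / 2 - s / 2) - 1 / 2 * (1 - 1 / (N : ℝ))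
      = (1 - s) / (2 * N) := by field_simp; ring
  rw [this]
  apply div_nonneg (by linarith) (by positivity)
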